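/- Let F_12(t; θ_1, θ_2) = P(Z_1²/θ_1 + Z_2²/θ_2 ≤ t) for independent standard normals Z_1, Z_2. Then ∂F_12(t; θ_1, θ_2)/∂θ_1 = 2 ∫_0^{√(θ_2 t)} (t − s²/θ_2)^{1/2} θ_1^{-1/2} φ(√(θ_1(t − s²/θ_2))) φ(s) ds, which is strictly positive for t > 0. -/

import Mathlib

open MeasureTheory ProbabilityTheory Real Set Filter Metric Topology
open scoped NNReal ENNReal

/-- `F₁₂(t;θ₁,θ₂) = P(Z₁²/θ₁ + Z₂²/θ₂ ≤ t)` for independent standard normals. -/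
noncomputable def F12 (θ₁ θ₂ t : ℝ) : ℝ :=
  (((gaussianReal 0 1).prod (gaussianReal 0 1))
    {z : ℝ × ℝ | z.1 ^ 2 / θ₁ + z.2 ^ 2 / θ₂ ≤ t}).toReal

lemma phi_even (x : ℝ) : gaussianPDFReal 0 1 (-x) = gaussianPDFReal 0 1 x := by
  simp [gaussianPDFReal, neg_sq]

lemma phi_cont : Continuous (gaussianPDFReal 0 1) := by
  unfold gaussianPDFReal; fun_prop

lemma phi_le (x : ℝ) : gaussianPDFReal 0 1 x ≤ (Real.sqrt (2 * π))⁻¹ := by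
  unfold gaussianPDFReal
  simp only [NNReal.coe_one, mul_one, sub_zero]
  calc (Real.sqrt (2*π))⁻¹ * rexp (-x^2/2) ≤ (Real.sqrt (2*π))⁻¹ * 1 := by
        have h1 : rexp (-x^2/2) ≤ 1 := Real.exp_le_one_iff.mpr (by nlinarith [sq_nonneg x])
        have h2 : (0:ℝ) ≤ (Real.sqrt (2*π))⁻¹ := by positivity
        nlinarith
    _ = _ := mul_one _

noncomputable def psi (u : ℝ) : ℝ := ∫ y in (-u)..u, gaussianPDFReal 0 1 y

lemma psi_hasDeriv (u : ℝ) : HasDerivAt psi (2 * gaussianPDFReal 0 1 u) u := by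
  have hint : ∀ a b : ℝ, IntervalIntegrable (gaussianPDFReal 0 1) volume a b :=
    fun a b => (phi_cont.intervalIntegrable a b)
  have h1 : HasDerivAt (fun u : ℝ => ∫ y in (0:ℝ)..u, gaussianPDFReal 0 1 y)
      (gaussianPDFReal 0 1 u) u :=
    intervalIntegral.integral_hasDerivAt_right (hint 0 u)
      (phi_cont.stronglyMeasurable.stronglyMeasurableAtFilter) phi_cont.continuousAt
  have h2' : HasDerivAt (fun v : ℝ => ∫ y in (0:ℝ)..v, gaussianPDFReal 0 1 y)
      (gaussianPDFReal 0 1 (-u)) (-u) :=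
    intervalIntegral.integral_hasDerivAt_right (hint 0 (-u))
      (phi_cont.stronglyMeasurable.stronglyMeasurableAtFilter) phi_cont.continuousAt
  have h2 : HasDerivAt (fun u : ℝ => ∫ y in (0:ℝ)..(-u), gaussianPDFReal 0 1 y)
      (-gaussianPDFReal 0 1 (-u)) u := by
    exact (h2'.comp u (hasDerivAt_neg u)).congr_deriv (by ring)
  have : HasDerivAt (fun u : ℝ => (∫ y in (0:ℝ)..u, gaussianPDFReal 0 1 y)
      - ∫ y in (0:ℝ)..(-u), gaussianPDFReal 0 1 y)
      (gaussianPDFReal 0 1 u - -gaussianPDFReal 0 1 (-u)) u := h1.sub h2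
  have heq : psi = fun u : ℝ => (∫ y in (0:ℝ)..u, gaussianPDFReal 0 1 y)
      - ∫ y in (0:ℝ)..(-u), gaussianPDFReal 0 1 y := by
    funext v
    rw [psi, ← intervalIntegral.integral_add_adjacent_intervals (hint (-v) 0) (hint 0 v)]
    have : ∫ y in (-v)..(0:ℝ), gaussianPDFReal 0 1 y
        = - ∫ y in (0:ℝ)..(-v), gaussianPDFReal 0 1 y :=
      intervalIntegral.integral_symm _ _
    rw [this]; ring
  rw [heq]
  convert this using 1
  rw [phi_even]; ring

lemma psi_nonneg {u : ℝ} (hu : 0 ≤ u) : 0 ≤ psi u :=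
  intervalIntegral.integral_nonneg (by linarith) (fun x _ => gaussianPDFReal_nonneg _ _ _)

lemma psi_le_one {u : ℝ} (hu : 0 ≤ u) : psi u ≤ 1 := by
  rw [psi, intervalIntegral.integral_of_le (by linarith)]
  calc ∫ y in Ioc (-u) u, gaussianPDFReal 0 1 y
      ≤ ∫ y, gaussianPDFReal 0 1 y :=
        setIntegral_le_integral (integrable_gaussianPDFReal 0 1)
          (ae_of_all _ (fun x => gaussianPDFReal_nonneg 0 1 x))
    _ = 1 := integral_gaussianPDFReal_eq_one 0 one_ne_zero

lemma sq_le_set {a : ℝ} (ha : 0 ≤ a) : {y : ℝ | y ^ 2 ≤ a} = Icc (-Real.sqrt a) (Real.sqrt a) := by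
  ext y
  simp only [mem_setOf_eq, mem_Icc, ← abs_le]
  constructor
  · intro h
    have := Real.sqrt_le_sqrt h
    rwa [Real.sqrt_sq_eq_abs] at this
  · intro h
    calc y^2 = |y|^2 := (sq_abs y).symm
      _ ≤ (Real.sqrt a)^2 := by have := abs_nonneg y; nlinarith
      _ = a := Real.sq_sqrt ha

lemma psi_cont : Continuous psi := continuous_iff_continuousAt.mpr (fun u => (psi_hasDeriv u).differentiableAt.continuousAt)

lemma psi_comp_cont (x θ₂ t : ℝ) :
    Continuous (fun s : ℝ => psi (Real.sqrt (x * (t - s^2/θ₂)))) := by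
  apply psi_cont.comp; fun_prop

lemma gauss_Icc (u : ℝ) (hu : 0 ≤ u) :
    gaussianReal 0 1 (Icc (-u) u) = ENNReal.ofReal (psi u) := by
  rw [gaussianReal_apply_eq_integral 0 one_ne_zero, psi,
    intervalIntegral.integral_of_le (by linarith), integral_Icc_eq_integral_Ioc]

lemma F12_eq (θ₂ t : ℝ) (h₂ : 0 < θ₂) (x : ℝ) (hx : 0 < x) :
    F12 x θ₂ t = ∫ s, psi (Real.sqrt (x * (t - s^2/θ₂))) ∂(gaussianReal 0 1) := by
  have hS : MeasurableSet {z : ℝ × ℝ | z.1 ^ 2 / x + z.2 ^ 2 / θ₂ ≤ t} := by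
    apply measurableSet_le _ measurable_const
    fun_prop
  have hsec : ∀ s : ℝ, gaussianReal 0 1 ((fun y => (y, s)) ⁻¹' {z : ℝ × ℝ | z.1 ^ 2 / x + z.2 ^ 2 / θ₂ ≤ t})
      = ENNReal.ofReal (psi (Real.sqrt (x * (t - s^2/θ₂)))) := by
    intro s
    have hpre : ((fun y => (y, s)) ⁻¹' {z : ℝ × ℝ | z.1 ^ 2 / x + z.2 ^ 2 / θ₂ ≤ t})
        = {y : ℝ | y ^ 2 ≤ x * (t - s^2/θ₂)} := by
      ext y
      simp only [mem_preimage, mem_setOf_eq]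
      constructor
      · intro h
        have h' := mul_le_mul_of_nonneg_right h hx.le
        rw [add_mul, div_mul_cancel₀ _ hx.ne'] at h'
        nlinarith
      · intro h
        have h' : y^2/x ≤ t - s^2/θ₂ := (div_le_iff₀ hx).mpr (by rw [mul_comm]; exact h)
        linarith
    rw [hpre]
    by_cases hc : 0 ≤ t - s^2/θ₂
    · rw [sq_le_set (by positivity), gauss_Icc _ (Real.sqrt_nonneg _)]
    · push_neg at hc
      have h1 : {y : ℝ | y ^ 2 ≤ x * (t - s^2/θ₂)} = ∅ := by
        ext y; simp only [mem_setOf_eq, mem_empty_iff_false, iff_false, not_le]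
        nlinarith [sq_nonneg y]
      have h2 : Real.sqrt (x * (t - s^2/θ₂)) = 0 :=
        Real.sqrt_eq_zero_of_nonpos (by nlinarith)
      rw [h1, h2]
      simp [psi]
  rw [F12, Measure.prod_apply_symm hS]
  rw [integral_eq_lintegral_of_nonneg_ae
    (ae_of_all _ (fun s => psi_nonneg (Real.sqrt_nonneg _)))
    (psi_comp_cont x θ₂ t).aestronglyMeasurable]
  congr 1
  exact lintegral_congr hsec

lemma scalar_id {u : ℝ} (hu : u ≠ 0) (a p : ℝ) :
    a / u * p = 2 * p * (1 / (2 * u) * a) := by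
  field_simp

lemma div_sqrt_mul {x c : ℝ} (hx : 0 < x) (hc : 0 < c) :
    c / Real.sqrt (x * c) = Real.sqrt c / Real.sqrt x := by
  have hsc : (0:ℝ) < Real.sqrt c := Real.sqrt_pos.mpr hc
  have hsx : (0:ℝ) < Real.sqrt x := Real.sqrt_pos.mpr hx
  rw [Real.sqrt_mul hx.le, div_eq_div_iff (mul_pos hsx hsc).ne' hsx.ne']
  linear_combination (-Real.sqrt x) * Real.mul_self_sqrt hc.le

noncomputable def Gd (θ₂ t x s : ℝ) : ℝ :=
  if 0 < t - s^2/θ₂ then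
    (t - s^2/θ₂) / Real.sqrt (x * (t - s^2/θ₂))
      * gaussianPDFReal 0 1 (Real.sqrt (x * (t - s^2/θ₂)))
  else 0

lemma Gd_meas (θ₂ t x : ℝ) : Measurable (fun s => Gd θ₂ t x s) := by
  unfold Gd
  apply Measurable.ite (measurableSet_lt measurable_const (by fun_prop))
  · apply Measurable.mul
    · fun_prop
    · exact (measurable_gaussianPDFReal 0 1).comp (by fun_prop)
  · exact measurable_const

lemma hasDeriv_int (θ₁ θ₂ t : ℝ) (h₁ : 0 < θ₁) (h₂ : 0 < θ₂) (ht : 0 < t) :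
    HasDerivAt (fun x => ∫ s, psi (Real.sqrt (x * (t - s^2/θ₂))) ∂(gaussianReal 0 1))
      (∫ s, Gd θ₂ t θ₁ s ∂(gaussianReal 0 1)) θ₁ := by
  set B : ℝ := Real.sqrt t / Real.sqrt (θ₁/2) * (Real.sqrt (2 * π))⁻¹ with hB
  have hball : ∀ x ∈ ball θ₁ (θ₁/2), θ₁/2 < x := by
    intro x hx
    have := abs_lt.mp (mem_ball_iff_norm.mp hx)
    linarith [this.1]
  have key := hasDerivAt_integral_of_dominated_loc_of_deriv_le
    (F := fun x s => psi (Real.sqrt (x * (t - s^2/θ₂))))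
    (F' := fun x s => Gd θ₂ t x s)
    (bound := fun _ => B) (μ := gaussianReal 0 1) (x₀ := θ₁)
    (ball_mem_nhds θ₁ (half_pos h₁))
    (Eventually.of_forall (fun x => (psi_comp_cont x θ₂ t).aestronglyMeasurable))
    ?_ ((Gd_meas θ₂ t θ₁).aestronglyMeasurable) ?_ (integrable_const B) ?_
  · exact key.2
  · -- integrability of F θ₁
    apply Integrable.mono' (integrable_const (1:ℝ))
      (psi_comp_cont θ₁ θ₂ t).aestronglyMeasurable
    refine ae_of_all _ (fun s => ?_)
    rw [Real.norm_eq_abs, abs_of_nonneg (psi_nonneg (Real.sqrt_nonneg _))]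
    exact psi_le_one (Real.sqrt_nonneg _)
  · -- bound
    refine ae_of_all _ (fun s => ?_)
    intro x hx
    have hx2 : θ₁/2 < x := hball x hx
    have hx0 : 0 < x := by linarith
    have hB0 : 0 ≤ B := by positivity
    rw [Gd]
    split_ifs with hc
    · set c := t - s^2/θ₂ with hc'
      have hct : c ≤ t := by
        have : 0 ≤ s^2/θ₂ := by positivity
        simp only [hc']; linarith
      have hsc : (0:ℝ) < Real.sqrt c := Real.sqrt_pos.mpr hc
      have hsx : (0:ℝ) < Real.sqrt x := Real.sqrt_pos.mpr hx0
      have hkey : c / Real.sqrt (x * c) = Real.sqrt c / Real.sqrt x :=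
        div_sqrt_mul hx0 hc
      rw [Real.norm_eq_abs, abs_of_nonneg (mul_nonneg (div_nonneg hc.le (Real.sqrt_nonneg _)) (gaussianPDFReal_nonneg _ _ _)), hkey, hB]
      have h1 : Real.sqrt c / Real.sqrt x ≤ Real.sqrt t / Real.sqrt (θ₁/2) := by
        apply div_le_div₀ (Real.sqrt_nonneg t) (Real.sqrt_le_sqrt hct)
          (Real.sqrt_pos.mpr (half_pos h₁)) (Real.sqrt_le_sqrt hx2.le)
      have h2 := phi_le (Real.sqrt (x * c))
      apply mul_le_mul h1 h2 (gaussianPDFReal_nonneg _ _ _) (by positivity)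
    · simpa using hB0
  · -- differentiability
    refine ae_of_all _ (fun s => ?_)
    intro x hx
    have hx0 : 0 < x := lt_trans (half_pos h₁) (hball x hx)
    set c := t - s^2/θ₂ with hc'
    by_cases hc : 0 < c
    · have hxc : 0 < x * c := mul_pos hx0 hc
      have h1 : HasDerivAt (fun x' : ℝ => x' * c) c x := hasDerivAt_mul_const c
      have h2 : HasDerivAt Real.sqrt (1 / (2 * Real.sqrt (x * c))) (x * c) :=
        Real.hasDerivAt_sqrt hxc.ne'
      have h3 : HasDerivAt (fun x' : ℝ => Real.sqrt (x' * c))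
          (1 / (2 * Real.sqrt (x * c)) * c) x := h2.comp x h1
      have h4 := (psi_hasDeriv (Real.sqrt (x * c))).comp x h3
      have hu : (0:ℝ) < Real.sqrt (x * c) := Real.sqrt_pos.mpr hxc
      refine HasDerivAt.congr_deriv h4 (Eq.symm ?_)
      show Gd θ₂ t x s = _
      rw [show Gd θ₂ t x s = (t - s^2/θ₂) / Real.sqrt (x * (t - s^2/θ₂)) * gaussianPDFReal 0 1 (Real.sqrt (x * (t - s^2/θ₂))) from by rw [Gd]; exact if_pos hc]
      exact scalar_id (Real.sqrt_pos.mpr hxc).ne' _ _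
    · have hev : (fun x' : ℝ => psi (Real.sqrt (x' * c))) =ᶠ[𝓝 x] fun _ => 0 := by
        filter_upwards [IsOpen.mem_nhds isOpen_Ioi (show x ∈ Ioi (0:ℝ) from hx0)] with x' hx'
        have : Real.sqrt (x' * c) = 0 := Real.sqrt_eq_zero_of_nonpos
          (mul_nonpos_of_nonneg_of_nonpos (le_of_lt hx') (not_lt.mp hc))
        simp [this, psi]
      have h0 : HasDerivAt (fun x' : ℝ => psi (Real.sqrt (x' * c))) 0 x :=
        (hasDerivAt_const x (0:ℝ)).congr_of_eventuallyEq hev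
      have hG : Gd θ₂ t x s = 0 := by rw [Gd]; exact if_neg hc
      show HasDerivAt (fun x' : ℝ => psi (Real.sqrt (x' * (t - s^2/θ₂)))) (Gd θ₂ t x s) x
      rw [hG]
      exact h0

lemma Gd_even (θ₂ t x s : ℝ) : Gd θ₂ t x (-s) = Gd θ₂ t x s := by
  rw [Gd, Gd, neg_sq]

lemma Gd_bound {θ₂ t x : ℝ} (h₂ : 0 < θ₂) (hx : 0 < x) (s : ℝ) :
    ‖Gd θ₂ t x s‖ ≤ Real.sqrt t / Real.sqrt x * (Real.sqrt (2 * π))⁻¹ := by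
  rw [Gd]
  split_ifs with hc
  · set c := t - s^2/θ₂ with hc'
    have hct : c ≤ t := by
      have : 0 ≤ s^2/θ₂ := by positivity
      simp only [hc']; linarith
    rw [Real.norm_eq_abs, abs_of_nonneg (mul_nonneg (div_nonneg hc.le (Real.sqrt_nonneg _))
      (gaussianPDFReal_nonneg _ _ _)), div_sqrt_mul hx hc]
    apply mul_le_mul _ (phi_le _) (gaussianPDFReal_nonneg _ _ _) (by positivity)
    exact div_le_div₀ (Real.sqrt_nonneg t) (Real.sqrt_le_sqrt hct) (Real.sqrt_pos.mpr hx) le_rfl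
  · simp only [norm_zero]
    positivity

lemma Gd_zero {θ₂ t x s : ℝ} (hc : ¬ (0 < t - s^2/θ₂)) : Gd θ₂ t x s = 0 := by
  rw [Gd]; exact if_neg hc

lemma integral_Gd (θ₁ θ₂ t : ℝ) (h₁ : 0 < θ₁) (h₂ : 0 < θ₂) (ht : 0 < t) :
    ∫ s, Gd θ₂ t θ₁ s ∂(gaussianReal 0 1)
      = 2 * ∫ s in (0:ℝ)..(Real.sqrt (θ₂ * t)),
          (t - s ^ 2 / θ₂) ^ ((1:ℝ)/2) * θ₁ ^ (-(1:ℝ)/2)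
            * gaussianPDFReal 0 1 (Real.sqrt (θ₁ * (t - s ^ 2 / θ₂)))
            * gaussianPDFReal 0 1 s := by
  set b := Real.sqrt (θ₂ * t) with hb
  have hb0 : 0 < b := Real.sqrt_pos.mpr (mul_pos h₂ ht)
  have hbsq : b ^ 2 = θ₂ * t := Real.sq_sqrt (mul_pos h₂ ht).le
  set f : ℝ → ℝ := fun s => gaussianPDFReal 0 1 s * Gd θ₂ t θ₁ s with hf
  have hfmeas : Measurable f := (measurable_gaussianPDFReal 0 1).mul (Gd_meas θ₂ t θ₁)
  -- step 1 : γ-integral to volume integral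
  have step1 : ∫ s, Gd θ₂ t θ₁ s ∂(gaussianReal 0 1) = ∫ s, f s := by
    rw [gaussianReal_of_var_ne_zero 0 one_ne_zero]
    have hde : gaussianPDF 0 1 = fun x => ((Real.toNNReal (gaussianPDFReal 0 1 x) : ℝ≥0) : ℝ≥0∞) := rfl
    rw [hde, integral_withDensity_eq_integral_smul
      ((measurable_gaussianPDFReal 0 1).real_toNNReal) (fun s => Gd θ₂ t θ₁ s)]
    have : ∀ s : ℝ, (Real.toNNReal (gaussianPDFReal 0 1 s)) • Gd θ₂ t θ₁ s = f s := by
      intro s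
      rw [NNReal.smul_def, Real.coe_toNNReal _ (gaussianPDFReal_nonneg _ _ _), hf]
      rfl
    simp only [this]
  -- step 2 : symmetry
  have feven : ∀ s : ℝ, f |s| = f s := by
    intro s
    rcases abs_choice s with h | h
    · rw [h]
    · rw [h, hf]; simp only [phi_even, Gd_even]
  have step2 : ∫ s, f s = 2 * ∫ s in Ioi (0:ℝ), f s := by
    rw [← integral_comp_abs (f := f)]
    congr 1
    funext s
    rw [feven]
  -- f vanishes beyond b
  have hzero : ∀ s ∈ Ioi b, f s = 0 := by
    intro s hs
    have hs' : b < s := hs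
    have hsq : θ₂ * t < s ^ 2 := by
      calc θ₂ * t = b ^ 2 := hbsq.symm
        _ < s ^ 2 := by nlinarith [hb0]
    have hc : ¬ (0 < t - s^2/θ₂) := by
      push_neg
      rw [sub_nonpos]
      rw [le_div_iff₀ h₂]
      nlinarith
    rw [hf]
    simp only [Gd_zero hc, mul_zero]
  -- step 3 : Ioi 0 = Ioc 0 b ∪ Ioi b
  have hint1 : IntegrableOn f (Ioc 0 b) := by
    apply Integrable.mono' (integrableOn_const (C := (Real.sqrt (2*π))⁻¹ * (Real.sqrt t / Real.sqrt θ₁ * (Real.sqrt (2 * π))⁻¹)) measure_Ioc_lt_top.ne)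
      hfmeas.aestronglyMeasurable.restrict
    refine ae_of_all _ (fun s => ?_)
    rw [hf, Real.norm_eq_abs, abs_mul, abs_of_nonneg (gaussianPDFReal_nonneg _ _ _)]
    calc gaussianPDFReal 0 1 s * |Gd θ₂ t θ₁ s|
        ≤ (Real.sqrt (2*π))⁻¹ * (Real.sqrt t / Real.sqrt θ₁ * (Real.sqrt (2 * π))⁻¹) := by
          apply mul_le_mul (phi_le s) (Gd_bound h₂ h₁ s) (abs_nonneg _) (by positivity)
      _ = _ := rfl
  have hint2 : IntegrableOn f (Ioi b) := by
    apply (integrableOn_congr_fun (fun s hs => (hzero s hs).symm) measurableSet_Ioi).mp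
    exact integrableOn_zero
  have step3 : ∫ s in Ioi (0:ℝ), f s = ∫ s in Ioc (0:ℝ) b, f s := by
    rw [← Ioc_union_Ioi_eq_Ioi hb0.le,
      setIntegral_union (Ioc_disjoint_Ioi le_rfl) measurableSet_Ioi hint1 hint2]
    have : ∫ s in Ioi b, f s = 0 := by
      rw [setIntegral_congr_fun measurableSet_Ioi hzero, integral_zero]
    rw [this, add_zero]
  -- step 4 : Ioc to interval integral and congruence
  have step4 : ∫ s in Ioc (0:ℝ) b, f s = ∫ s in (0:ℝ)..b,
      (t - s ^ 2 / θ₂) ^ ((1:ℝ)/2) * θ₁ ^ (-(1:ℝ)/2)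
        * gaussianPDFReal 0 1 (Real.sqrt (θ₁ * (t - s ^ 2 / θ₂)))
        * gaussianPDFReal 0 1 s := by
    rw [← intervalIntegral.integral_of_le hb0.le]
    apply intervalIntegral.integral_congr
    intro s hs
    rw [uIcc_of_le hb0.le] at hs
    obtain ⟨hs0, hsb⟩ := hs
    have hsq : s ^ 2 ≤ θ₂ * t := by
      calc s ^ 2 ≤ b ^ 2 := by nlinarith
        _ = θ₂ * t := hbsq
    have hc0 : 0 ≤ t - s ^ 2 / θ₂ := by
      rw [sub_nonneg, div_le_iff₀ h₂]
      nlinarith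
    by_cases hc : 0 < t - s^2/θ₂
    · rw [hf]
      simp only []
      rw [show Gd θ₂ t θ₁ s = (t - s^2/θ₂) / Real.sqrt (θ₁ * (t - s^2/θ₂))
          * gaussianPDFReal 0 1 (Real.sqrt (θ₁ * (t - s^2/θ₂))) from by rw [Gd]; exact if_pos hc]
      rw [div_sqrt_mul h₁ hc]
      rw [show (t - s^2/θ₂) ^ ((1:ℝ)/2) = Real.sqrt (t - s^2/θ₂) from (Real.sqrt_eq_rpow _).symm]
      rw [show θ₁ ^ (-(1:ℝ)/2) = (Real.sqrt θ₁)⁻¹ from by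
        rw [neg_div, Real.rpow_neg h₁.le, ← Real.sqrt_eq_rpow]]
      rw [div_eq_mul_inv]
      ring
    · have hc0' : t - s^2/θ₂ = 0 := le_antisymm (not_lt.mp hc) hc0
      rw [hf]
      simp only [Gd_zero hc, mul_zero, hc0']
      rw [Real.zero_rpow (by norm_num : (1:ℝ)/2 ≠ 0)]
      ring
  rw [step1, step2, step3, step4]

lemma target_pos (θ₁ θ₂ t : ℝ) (h₁ : 0 < θ₁) (h₂ : 0 < θ₂) (ht : 0 < t) :
    0 < ∫ s in (0:ℝ)..(Real.sqrt (θ₂ * t)),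
          (t - s ^ 2 / θ₂) ^ ((1:ℝ)/2) * θ₁ ^ (-(1:ℝ)/2)
            * gaussianPDFReal 0 1 (Real.sqrt (θ₁ * (t - s ^ 2 / θ₂)))
            * gaussianPDFReal 0 1 s := by
  have hb0 : 0 < Real.sqrt (θ₂ * t) := Real.sqrt_pos.mpr (mul_pos h₂ ht)
  have hbsq : Real.sqrt (θ₂ * t) ^ 2 = θ₂ * t := Real.sq_sqrt (mul_pos h₂ ht).le
  have hcont : Continuous (fun s : ℝ =>
      (t - s ^ 2 / θ₂) ^ ((1:ℝ)/2) * θ₁ ^ (-(1:ℝ)/2)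
        * gaussianPDFReal 0 1 (Real.sqrt (θ₁ * (t - s ^ 2 / θ₂)))
        * gaussianPDFReal 0 1 s) := by
    apply Continuous.mul _ phi_cont
    apply Continuous.mul
    · apply Continuous.mul _ continuous_const
      exact (Real.continuous_rpow_const (by norm_num)).comp (by fun_prop)
    · exact phi_cont.comp (Real.continuous_sqrt.comp (by fun_prop))
  apply intervalIntegral.intervalIntegral_pos_of_pos_on
    (hcont.intervalIntegrable _ _) _ hb0
  intro s hs
  obtain ⟨hs0, hsb⟩ := hs
  have hc : 0 < t - s ^ 2 / θ₂ := by
    rw [sub_pos, div_lt_iff₀ h₂]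
    nlinarith
  have h1 : 0 < (t - s ^ 2 / θ₂) ^ ((1:ℝ)/2) := Real.rpow_pos_of_pos hc _
  have h2 : 0 < θ₁ ^ (-(1:ℝ)/2) := Real.rpow_pos_of_pos h₁ _
  have h3 := gaussianPDFReal_pos 0 1 (Real.sqrt (θ₁ * (t - s ^ 2 / θ₂))) one_ne_zero
  have h4 := gaussianPDFReal_pos 0 1 s one_ne_zero
  positivity

/-- the partial derivative of `F₁₂` in `θ₁` has an explicit integral form
and is strictly positive. -/
theorem deriv_F12 (θ₁ θ₂ t : ℝ) (h₁ : 0 < θ₁) (h₂ : 0 < θ₂) (ht : 0 < t) :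
    deriv (fun x => F12 x θ₂ t) θ₁
        = 2 * ∫ s in (0:ℝ)..(Real.sqrt (θ₂ * t)),
            (t - s ^ 2 / θ₂) ^ ((1:ℝ)/2) * θ₁ ^ (-(1:ℝ)/2)
              * gaussianPDFReal 0 1 (Real.sqrt (θ₁ * (t - s ^ 2 / θ₂)))
              * gaussianPDFReal 0 1 s
      ∧ 0 < deriv (fun x => F12 x θ₂ t) θ₁ := by
  have hev : (fun x => F12 x θ₂ t) =ᶠ[𝓝 θ₁]
      (fun x => ∫ s, psi (Real.sqrt (x * (t - s^2/θ₂))) ∂(gaussianReal 0 1)) := by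
    filter_upwards [IsOpen.mem_nhds isOpen_Ioi h₁] with x hx
    exact F12_eq θ₂ t h₂ x hx
  have hd : deriv (fun x => F12 x θ₂ t) θ₁
      = ∫ s, Gd θ₂ t θ₁ s ∂(gaussianReal 0 1) := by
    rw [hev.deriv_eq]
    exact (hasDeriv_int θ₁ θ₂ t h₁ h₂ ht).deriv
  rw [hd, integral_Gd θ₁ θ₂ t h₁ h₂ ht]
  exact ⟨rfl, mul_pos two_pos (target_pos θ₁ θ₂ t h₁ h₂ ht)⟩
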